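/- Let G be a right-linear PE-CFG and p a right-linear parsing expression. If L(G[p]) has the prefix property, then for every parsing expression q occurring in G[p] — that is, q is a subexpression of p, or a subexpression of P(A) for some non-terminal A reachable from p — L(G[q]) has the prefix property. -/
import Mathlib


/-- Parsing expressions over non-terminals `V` and terminals `T`. -/
inductive PExp (V T : Type) : Type where
  | eps : PExp V T
  | term : T → PExp V T
  | var : V → PExp V T
  | cat : PExp V T → PExp V T → PExp V T
  | alt : PExp V T → PExp V T → PExp V T

/-- The relation `G[p] v ⤳CFG w`, where the PE-CFG is given by its production
function `P` (the initial expression is the first explicit argument). -/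
inductive CFGMatch {V T : Type} (P : V → PExp V T) : PExp V T → List T → List T → Prop where
  | empty (x : List T) : CFGMatch P .eps x x
  | term (a : T) (x : List T) : CFGMatch P (.term a) (a :: x) x
  | var {A : V} {v w : List T} : CFGMatch P (P A) v w → CFGMatch P (.var A) v w
  | cat {p₁ p₂ : PExp V T} {v u w : List T} :
      CFGMatch P p₁ v u → CFGMatch P p₂ u w → CFGMatch P (.cat p₁ p₂) v w
  | altL {p₁ p₂ : PExp V T} {v w : List T} :
      CFGMatch P p₁ v w → CFGMatch P (.alt p₁ p₂) v w
  | altR {p₁ p₂ : PExp V T} {v w : List T} :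
      CFGMatch P p₂ v w → CFGMatch P (.alt p₁ p₂) v w

/-- Result of a PEG match: either the remaining suffix of the input, or failure. -/
inductive Res (T : Type) : Type where
  | str : List T → Res T
  | fail : Res T

/-- The relation `G[p] x ⤳PEG X` (ordered choice, explicit failure). -/
inductive PEGMatch {V T : Type} (P : V → PExp V T) : PExp V T → List T → Res T → Prop where
  | empty (x : List T) : PEGMatch P .eps x (.str x)
  | termS (a : T) (x : List T) : PEGMatch P (.term a) (a :: x) (.str x)
  | termF {b a : T} (x : List T) : b ≠ a → PEGMatch P (.term b) (a :: x) .fail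
  | termE (a : T) : PEGMatch P (.term a) [] .fail
  | var {A : V} {x : List T} {r : Res T} : PEGMatch P (P A) x r → PEGMatch P (.var A) x r
  | catS {p₁ p₂ : PExp V T} {v u : List T} {r : Res T} :
      PEGMatch P p₁ v (.str u) → PEGMatch P p₂ u r → PEGMatch P (.cat p₁ p₂) v r
  | catF {p₁ p₂ : PExp V T} {v : List T} :
      PEGMatch P p₁ v .fail → PEGMatch P (.cat p₁ p₂) v .fail
  | ordS {p₁ p₂ : PExp V T} {v w : List T} :
      PEGMatch P p₁ v (.str w) → PEGMatch P (.alt p₁ p₂) v (.str w)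
  | ordB {p₁ p₂ : PExp V T} {v w : List T} :
      PEGMatch P p₁ v .fail → PEGMatch P p₂ v (.str w) → PEGMatch P (.alt p₁ p₂) v (.str w)
  | ordF {p₁ p₂ : PExp V T} {v : List T} :
      PEGMatch P p₁ v .fail → PEGMatch P p₂ v .fail → PEGMatch P (.alt p₁ p₂) v .fail

/-- `Subterm q p`: the expression `q` is a subexpression of `p`. -/
inductive Subterm {V T : Type} : PExp V T → PExp V T → Prop where
  | refl (p : PExp V T) : Subterm p p
  | catL {q p₁ p₂ : PExp V T} : Subterm q p₁ → Subterm q (.cat p₁ p₂)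
  | catR {q p₁ p₂ : PExp V T} : Subterm q p₂ → Subterm q (.cat p₁ p₂)
  | altL {q p₁ p₂ : PExp V T} : Subterm q p₁ → Subterm q (.alt p₁ p₂)
  | altR {q p₁ p₂ : PExp V T} : Subterm q p₂ → Subterm q (.alt p₁ p₂)

/-- `q` occurs in the grammar `(P, pS)`: it is a subexpression of the initial
expression `pS` or of some production `P A`. -/
def OccursIn {V T : Type} (P : V → PExp V T) (pS : PExp V T) (q : PExp V T) : Prop :=
  Subterm q pS ∨ ∃ A : V, Subterm q (P A)

/-- `L(G[p])`: the set of prefixes matched by `G[p]`. -/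
def Lang {V T : Type} (P : V → PExp V T) (p : PExp V T) : Set (List T) :=
  {x : List T | ∃ y : List T, CFGMatch P p (x ++ y) y}

/-- A language has the prefix property: no string in it is a proper prefix of
another string in it. -/
def PrefixProp {T : Type} (L : Set (List T)) : Prop :=
  ∀ x ∈ L, ∀ y ∈ L, x <+: y → x = y

/-- Right-linear parsing expressions: `ε`, a terminal, a non-terminal, a
concatenation of a terminal with a right-linear expression, or a choice of two
right-linear expressions. -/
inductive RightLin {V T : Type} : PExp V T → Prop where
  | eps : RightLin .eps
  | term (a : T) : RightLin (.term a)
  | var (A : V) : RightLin (.var A)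
  | cat {a : T} {p₂ : PExp V T} : RightLin p₂ → RightLin (.cat (.term a) p₂)
  | alt {p₁ p₂ : PExp V T} : RightLin p₁ → RightLin p₂ → RightLin (.alt p₁ p₂)

/-- A non-terminal `A` is reachable from `p` (in zero or more steps): `A`
occurs in `p`, or `A` occurs in `P B` for some `B` reachable from `p`. -/
inductive Reach {V T : Type} (P : V → PExp V T) (p : PExp V T) : V → Prop where
  | base {A : V} : Subterm (.var A) p → Reach P p A
  | step {A B : V} : Reach P p B → Subterm (.var A) (P B) → Reach P p A

lemma term_inv {V T : Type} {P : V → PExp V T} {a : T} {v w : List T}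
    (h : CFGMatch P (.term a) v w) : v = a :: w := by
  cases h; rfl

lemma lang_term_mem {V T : Type} {P : V → PExp V T} {a : T} {x : List T}
    (hx : x ∈ Lang P (.term a)) : x = [a] := by
  obtain ⟨y, h⟩ := hx
  exact List.append_cancel_right (by simpa using term_inv h)

lemma lang_cat_mem {V T : Type} {P : V → PExp V T} {a : T} {p₂ : PExp V T} {u : List T}
    (hu : u ∈ Lang P p₂) : a :: u ∈ Lang P (.cat (.term a) p₂) := by
  obtain ⟨y, h⟩ := hu
  exact ⟨y, CFGMatch.cat (CFGMatch.term a (u ++ y)) h⟩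

lemma lang_var_eq {V T : Type} (P : V → PExp V T) (A : V) :
    Lang P (.var A) = Lang P (P A) := by
  ext x
  constructor
  · rintro ⟨y, h⟩
    cases h with
    | var h => exact ⟨y, h⟩
  · rintro ⟨y, h⟩
    exact ⟨y, CFGMatch.var h⟩

lemma pref_subterm {V T : Type} {P : V → PExp V T} :
    ∀ {q r : PExp V T}, Subterm q r → RightLin r →
      PrefixProp (Lang P r) → PrefixProp (Lang P q) := by
  intro q r hs
  induction hs with
  | refl => exact fun _ h => h
  | catL hs ih =>
    intro hr _
    cases hr with
    | cat h2 =>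
      cases hs
      intro x hx y hy _
      rw [lang_term_mem hx, lang_term_mem hy]
  | catR hs ih =>
    intro hr hpref
    cases hr with
    | cat h2 =>
      refine ih h2 ?_
      intro u hu v hv huv
      have := hpref _ (lang_cat_mem hu) _ (lang_cat_mem hv)
        (List.cons_prefix_cons.mpr ⟨rfl, huv⟩)
      injection this
  | altL hs ih =>
    intro hr hpref
    cases hr with
    | alt h1 h2 =>
      refine ih h1 ?_
      intro u hu v hv huv
      obtain ⟨y, h⟩ := hu
      obtain ⟨z, h'⟩ := hv
      exact hpref u ⟨y, CFGMatch.altL h⟩ v ⟨z, CFGMatch.altL h'⟩ huv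
  | altR hs ih =>
    intro hr hpref
    cases hr with
    | alt h1 h2 =>
      refine ih h2 ?_
      intro u hu v hv huv
      obtain ⟨y, h⟩ := hu
      obtain ⟨z, h'⟩ := hv
      exact hpref u ⟨y, CFGMatch.altR h⟩ v ⟨z, CFGMatch.altR h'⟩ huv

lemma pref_reach {V T : Type} {P : V → PExp V T} (hG : ∀ A : V, RightLin (P A))
    {p : PExp V T} (hp : RightLin p) (hpref : PrefixProp (Lang P p)) :
    ∀ {A : V}, Reach P p A → PrefixProp (Lang P (P A)) := by
  intro A h
  induction h with
  | base hs =>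
    have := pref_subterm hs hp hpref
    rwa [lang_var_eq] at this
  | step hB hs ih =>
    have := pref_subterm hs (hG _) ih
    rwa [lang_var_eq] at this

/-- in a right-linear PE-CFG, if `L(G[p])` has the prefix
property for a right-linear `p`, then `L(G[q])` has the prefix property for
every expression `q` occurring in `G[p]`: a subexpression of `p`, or of `P A`
for some non-terminal `A` reachable from `p`. -/
theorem stmt_17 {V T : Type} [Fintype V] [Fintype T]
    (P : V → PExp V T) (hG : ∀ A : V, RightLin (P A))
    (p : PExp V T) (hp : RightLin p)
    (hpref : PrefixProp (Lang P p)) :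
    ∀ q : PExp V T,
      (Subterm q p ∨ ∃ A : V, Reach P p A ∧ Subterm q (P A)) →
      PrefixProp (Lang P q) := by
  intro q hq
  rcases hq with hs | ⟨A, hA, hs⟩
  · exact pref_subterm hs hp hpref
  · exact pref_subterm hs (hG A) (pref_reach hG hp hpref hA)
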